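/- Let (A, ν, μ) be a Gerstenhaber algebra and {νₙ} the L∞-brackets νₙ = μ^{n-1} ⊐ ν (ν₁ = 0, ν₂ = ν). Then on n-fold symmetric tensors the coderivation extending the full family of brackets is proportional to the coderivation extending ν alone: Σ_{i=1}^{n} μ^{n-i+1} ∘ (⊗^{n-i+1} ⊐ νᵢ) = 2^{n-2} · μ^{n-2} ∘ (⊗^{n-1} ⊐ ν) as maps (SⁿA)ₖ → A, for n ≥ 2. -/

import Mathlib

set_option maxHeartbeats 1000000


open Finset

noncomputable def unshuffleSign (K : Type) [Field K] {n : ℕ}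
    (S : Finset (Fin n)) (d : Fin n → ℤ) : K :=
  (-1 : K) ^ (∑ p ∈ S, d p * ∑ q ∈ Sᶜ.filter (fun q => q < p), d q)

noncomputable def mprod {K A : Type} [Field K] [AddCommGroup A] [Module K A]
    (μ : A →ₗ[K] A →ₗ[K] A) (x : A) (l : List A) : A :=
  l.foldl (fun u v => μ u v) x

/-- The higher brackets `νₙ = μ^{n-1} ⊐ ν` of a Gerstenhaber algebra (`ν₂ = ν`, `ν_{≤1} = 0`). -/
noncomputable def nuFam {K A : Type} [Field K] [AddCommGroup A] [Module K A]
    (ν μ : A →ₗ[K] A →ₗ[K] A)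
    (n : ℕ) (d : Fin n → ℤ) (a : Fin n → A) : A :=
  ∑ p : Fin n, ∑ q ∈ univ.filter (fun q => p < q),
    ((-1 : K) ^ (d p * (∑ j ∈ univ.filter (fun j => j < p), d j)
      + d q * (∑ j ∈ univ.filter (fun j => j < q ∧ j ≠ p), d j))) •
      mprod μ (ν (a p) (a q))
        (((List.finRange n).filter (fun k => decide (k ≠ p ∧ k ≠ q))).map a)

/-- `μ^{n-i+1} ∘ (⊗^{n-i+1} ⊐ νᵢ)` evaluated on `a₁ ⋯ aₙ ∈ SⁿA`: sum over `(i, n-i)`-unshuffles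
with Koszul signs, applying `νᵢ` to the chosen block and multiplying by the remaining factors
in order. -/
noncomputable def hatNuMul {K A : Type} [Field K] [AddCommGroup A] [Module K A]
    (ν μ : A →ₗ[K] A →ₗ[K] A)
    (n i : ℕ) (d : Fin n → ℤ) (a : Fin n → A) : A :=
  ∑ S : {S : Finset (Fin n) // S.card = i},
    unshuffleSign K S.1 d •
      mprod μ
        (nuFam ν μ i (fun k => d (S.1.orderEmbOfFin S.2 k))
          (fun k => a (S.1.orderEmbOfFin S.2 k)))
        (((List.finRange n).filter (fun k => decide (k ∉ S.1))).map a)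

section basics
variable {K A : Type} [Field K] [AddCommGroup A] [Module K A]
variable (μ : A →ₗ[K] A →ₗ[K] A)

@[simp] lemma mprod_nil (x : A) : mprod μ x [] = x := rfl

@[simp] lemma mprod_cons (x v : A) (l : List A) :
    mprod μ x (v :: l) = mprod μ (μ x v) l := rfl

lemma mprod_append (x : A) (l₁ l₂ : List A) :
    mprod μ x (l₁ ++ l₂) = mprod μ (mprod μ x l₁) l₂ :=
  List.foldl_append

lemma mprod_add (x y : A) (l : List A) :
    mprod μ (x + y) l = mprod μ x l + mprod μ y l := by
  induction l generalizing x y with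
  | nil => rfl
  | cons v t ih => simp [mprod_cons, ← ih]

lemma mprod_smul (c : K) (x : A) (l : List A) :
    mprod μ (c • x) l = c • mprod μ x l := by
  induction l generalizing x with
  | nil => rfl
  | cons v t ih => simp [mprod_cons, ← ih]

lemma mprod_zero (l : List A) : mprod μ (0 : A) l = 0 := by
  induction l with
  | nil => rfl
  | cons v t ih => simp [mprod_cons, ih]

lemma mprod_sum {ι : Type*} [DecidableEq ι] (s : Finset ι) (f : ι → A) (l : List A) :
    mprod μ (∑ t ∈ s, f t) l = ∑ t ∈ s, mprod μ (f t) l := by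
  induction s using Finset.induction with
  | empty => simp [mprod_zero]
  | insert _ _ h ih => simp [Finset.sum_insert h, mprod_add, ih]

-- sign lemmas
lemma neg_one_zpow_add (e f : ℤ) : ((-1 : K) ^ (e + f)) = (-1 : K) ^ e * (-1 : K) ^ f :=
  zpow_add₀ (by norm_num) e f

lemma neg_one_zpow_two_mul (c : ℤ) : ((-1 : K) ^ (2 * c)) = 1 := by
  rw [zpow_mul]; norm_num

lemma neg_one_zpow_even_add (e c : ℤ) : ((-1 : K) ^ (e + 2 * c)) = (-1 : K) ^ e := by
  rw [neg_one_zpow_add, neg_one_zpow_two_mul, mul_one]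

lemma neg_one_zpow_eq_of_sub_even (e f c : ℤ) (h : e = f + 2 * c) :
    ((-1 : K) ^ e) = (-1 : K) ^ f := by
  rw [h, neg_one_zpow_even_add]

end basics

section perm
variable {ι : Type*} [LinearOrder ι]

/-- Weighted inversion count of a list. -/
def invExp (d : ι → ℤ) : List ι → ℤ
  | [] => 0
  | x :: t => d x * ((t.filter (fun y => decide (y < x))).map d).sum + invExp d t

@[simp] lemma invExp_nil (d : ι → ℤ) : invExp d [] = 0 := rfl

lemma invExp_cons (d : ι → ℤ) (x : ι) (t : List ι) :
    invExp d (x :: t) = d x * ((t.filter (fun y => decide (y < x))).map d).sum + invExp d t := rfl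

lemma filter_map_sum_perm (d : ι → ℤ) (p : ι → Bool) {l₁ l₂ : List ι} (h : l₁.Perm l₂) :
    ((l₁.filter p).map d).sum = ((l₂.filter p).map d).sum :=
  ((h.filter p).map d).sum_eq

variable {K A : Type} [Field K] [AddCommGroup A] [Module K A]
variable (𝒜 : ℤ → Submodule K A) (μ : A →ₗ[K] A →ₗ[K] A)

lemma mprod_perm
    (hμassoc : ∀ a b c : A, μ (μ a b) c = μ a (μ b c))
    (hμcomm : ∀ (i j : ℤ) (a b : A), a ∈ 𝒜 i → b ∈ 𝒜 j →
      μ a b = ((-1 : K) ^ (i * j)) • μ b a)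
    (d : ι → ℤ) (a : ι → A)
    {l₁ l₂ : List ι} (h : l₁.Perm l₂) (hl : ∀ y ∈ l₁, a y ∈ 𝒜 (d y)) :
    ∀ X : A, mprod μ X (l₁.map a)
      = ((-1 : K) ^ (invExp d l₁ + invExp d l₂)) • mprod μ X (l₂.map a) := by
  induction h with
  | nil => intro X; simp
  | cons x h ih =>
      intro X
      rename_i t₁ t₂
      have hl' : ∀ y ∈ t₁, a y ∈ 𝒜 (d y) := fun y hy => hl y (List.mem_cons_of_mem _ hy)
      simp only [List.map_cons, mprod_cons, invExp_cons]
      rw [ih hl' (μ X (a x))]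
      congr 1
      rw [filter_map_sum_perm d _ h]
      rw [show d x * ((t₂.filter (fun y => decide (y < x))).map d).sum + invExp d t₁
            + (d x * ((t₂.filter (fun y => decide (y < x))).map d).sum + invExp d t₂)
          = (invExp d t₁ + invExp d t₂)
            + 2 * (d x * ((t₂.filter (fun y => decide (y < x))).map d).sum) by ring,
        neg_one_zpow_even_add]
  | swap x y t =>
      intro X
      have hx : a x ∈ 𝒜 (d x) := hl x (by simp)
      have hy : a y ∈ 𝒜 (d y) := hl y (by simp)
      have key : μ (μ X (a y)) (a x) = ((-1:K)^(d x * d y)) • μ (μ X (a x)) (a y) := by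
        rw [hμassoc, hμassoc, hμcomm (d y) (d x) _ _ hy hx, map_smul, mul_comm (d y) (d x)]
      simp only [List.map_cons, mprod_cons, invExp_cons, List.filter_cons]
      rcases lt_trichotomy x y with hxy | hxy | hxy
      · rw [key, mprod_smul, if_pos (by simpa using hxy), if_neg (by simpa using asymm hxy)]
        congr 1
        simp only [List.map_cons, List.sum_cons]
        rw [show d y * (d x + ((t.filter (fun z => decide (z < y))).map d).sum)
              + (d x * ((t.filter (fun z => decide (z < x))).map d).sum + invExp d t)
              + (d x * ((t.filter (fun z => decide (z < x))).map d).sum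
                + (d y * ((t.filter (fun z => decide (z < y))).map d).sum + invExp d t))
            = d x * d y + 2 * (d y * ((t.filter (fun z => decide (z < y))).map d).sum
                + d x * ((t.filter (fun z => decide (z < x))).map d).sum + invExp d t) by ring]
        exact (neg_one_zpow_even_add _ _).symm
      · subst hxy
        rw [if_neg (by simp : ¬(decide (x < x) = true))]
        rw [show d x * ((t.filter (fun z => decide (z < x))).map d).sum
              + (d x * ((t.filter (fun z => decide (z < x))).map d).sum + invExp d t)
              + (d x * ((t.filter (fun z => decide (z < x))).map d).sum
                + (d x * ((t.filter (fun z => decide (z < x))).map d).sum + invExp d t))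
            = 0 + 2 * (d x * ((t.filter (fun z => decide (z < x))).map d).sum
                + d x * ((t.filter (fun z => decide (z < x))).map d).sum + invExp d t) by ring,
          neg_one_zpow_even_add]
        simp
      · rw [key, mprod_smul, if_neg (by simpa using asymm hxy), if_pos (by simpa using hxy)]
        congr 1
        simp only [List.map_cons, List.sum_cons]
        rw [show d y * ((t.filter (fun z => decide (z < y))).map d).sum
              + (d x * ((t.filter (fun z => decide (z < x))).map d).sum + invExp d t)
              + (d x * (d y + ((t.filter (fun z => decide (z < x))).map d).sum)
                + (d y * ((t.filter (fun z => decide (z < y))).map d).sum + invExp d t))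
            = d x * d y + 2 * (d y * ((t.filter (fun z => decide (z < y))).map d).sum
                + d x * ((t.filter (fun z => decide (z < x))).map d).sum + invExp d t) by ring]
        exact (neg_one_zpow_even_add _ _).symm
  | trans h₁ h₂ ih₁ ih₂ =>
      intro X
      rename_i l₁ l₂ l₃
      have hl₂ : ∀ y ∈ l₂, a y ∈ 𝒜 (d y) := fun y hy => hl y (h₁.symm.mem_iff.mp hy)
      rw [ih₁ hl X, ih₂ hl₂]
      rw [smul_smul, ← neg_one_zpow_add]
      congr 1
      rw [show invExp d l₁ + invExp d l₂ + (invExp d l₂ + invExp d l₃)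
          = (invExp d l₁ + invExp d l₃) + 2 * invExp d l₂ by ring, neg_one_zpow_even_add]
end perm

section sorted
variable {ι : Type*} [LinearOrder ι] (d : ι → ℤ)

lemma invExp_sorted {l : List ι} (h : l.Pairwise (· < ·)) : invExp d l = 0 := by
  induction l with
  | nil => rfl
  | cons x t ih =>
      rw [invExp_cons, ih h.of_cons]
      have : t.filter (fun y => decide (y < x)) = [] := by
        rw [List.filter_eq_nil_iff]
        intro y hy
        simpa using asymm (List.rel_of_pairwise_cons h hy)
      rw [this]
      simp

lemma invExp_append (l₁ l₂ : List ι) :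
    invExp d (l₁ ++ l₂) = invExp d l₁ + invExp d l₂
      + (l₁.map (fun x => d x * ((l₂.filter (fun y => decide (y < x))).map d).sum)).sum := by
  induction l₁ with
  | nil => simp
  | cons x t ih =>
      simp only [List.cons_append, invExp_cons, ih, List.filter_append, List.map_append,
        List.sum_append, List.map_cons, List.sum_cons]
      ring

lemma finRange_filter_sorted (n : ℕ) (p : Fin n → Bool) :
    ((List.finRange n).filter p).Pairwise (· < ·) :=
  List.Pairwise.sublist List.filter_sublist (List.pairwise_lt_finRange n)

lemma finRange_filter_map_sum (n : ℕ) (p : Fin n → Bool) (d : Fin n → ℤ) :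
    (((List.finRange n).filter p).map d).sum = ∑ x ∈ univ.filter (fun x => p x = true), d x := by
  rw [Finset.sum_filter, Fin.sum_univ_def]
  induction (List.finRange n) with
  | nil => simp
  | cons x t ih =>
      rw [List.filter_cons]
      by_cases h : p x = true
      · simp [h, ih]
      · simp [h, ih]
end sorted

section transport
variable {n i : ℕ} (S : Finset (Fin n)) (hS : S.card = i)

lemma mem_iff_orderEmb (x : Fin n) : x ∈ S ↔ ∃ k, S.orderEmbOfFin hS k = x := by
  constructor
  · intro hx
    have : x ∈ Set.range (S.orderEmbOfFin hS) := by
      rw [Finset.range_orderEmbOfFin]; exact hx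
    exact this
  · rintro ⟨k, rfl⟩
    exact Finset.orderEmbOfFin_mem S hS k

lemma sum_via_orderEmb (d : Fin n → ℤ)
    (p : Fin i → Prop) [DecidablePred p] (p' : Fin n → Prop) [DecidablePred p']
    (hcompat : ∀ k : Fin i, p k ↔ p' (S.orderEmbOfFin hS k)) :
    ∑ j ∈ univ.filter p, d (S.orderEmbOfFin hS j) = ∑ x ∈ S.filter p', d x := by
  have hmap : (univ.filter p).map (S.orderEmbOfFin hS).toEmbedding = S.filter p' := by
    ext x
    simp only [Finset.mem_map, Finset.mem_filter, Finset.mem_univ, true_and,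
      RelEmbedding.coe_toEmbedding]
    constructor
    · rintro ⟨k, hk, rfl⟩
      exact ⟨Finset.orderEmbOfFin_mem S hS k, (hcompat k).mp hk⟩
    · rintro ⟨hxS, hx⟩
      obtain ⟨k, rfl⟩ := (mem_iff_orderEmb S hS x).mp hxS
      exact ⟨k, (hcompat k).mpr hx, rfl⟩
  rw [← hmap, Finset.sum_map]
  rfl
end transport

section core
variable {K A : Type} [Field K] [AddCommGroup A] [Module K A]
variable (𝒜 : ℤ → Submodule K A) (μ ν : A →ₗ[K] A →ₗ[K] A)

lemma core_term
    (hμassoc : ∀ a b c : A, μ (μ a b) c = μ a (μ b c))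
    (hμcomm : ∀ (i j : ℤ) (a b : A), a ∈ 𝒜 i → b ∈ 𝒜 j →
      μ a b = ((-1 : K) ^ (i * j)) • μ b a)
    {n : ℕ} (d : Fin n → ℤ) (a : Fin n → A) (ha : ∀ i, a i ∈ 𝒜 (d i))
    {i : ℕ} (S : Finset (Fin n)) (hS : S.card = i) (p' q' : Fin i) (hpq : p' < q') :
    unshuffleSign K S d •
      (((-1 : K) ^ (d (S.orderEmbOfFin hS p') * (∑ j ∈ univ.filter (fun j => j < p'), d (S.orderEmbOfFin hS j))
        + d (S.orderEmbOfFin hS q') * (∑ j ∈ univ.filter (fun j => j < q' ∧ j ≠ p'), d (S.orderEmbOfFin hS j)))) •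
      mprod μ (ν (a (S.orderEmbOfFin hS p')) (a (S.orderEmbOfFin hS q')))
        ((((List.finRange i).filter (fun k => decide (k ≠ p' ∧ k ≠ q'))).map (fun k => a (S.orderEmbOfFin hS k)))
          ++ ((List.finRange n).filter (fun k => decide (k ∉ S))).map a))
    = ((-1 : K) ^ (d (S.orderEmbOfFin hS p') * (∑ j ∈ univ.filter (fun j => j < S.orderEmbOfFin hS p'), d j)
        + d (S.orderEmbOfFin hS q') * (∑ j ∈ univ.filter (fun j => j < S.orderEmbOfFin hS q' ∧ j ≠ S.orderEmbOfFin hS p'), d j))) •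
      mprod μ (ν (a (S.orderEmbOfFin hS p')) (a (S.orderEmbOfFin hS q')))
        (((List.finRange n).filter (fun k => decide (k ≠ S.orderEmbOfFin hS p' ∧ k ≠ S.orderEmbOfFin hS q'))).map a) := by
  set σ := S.orderEmbOfFin hS with hσ
  set P := σ p' with hP
  set Q := σ q' with hQ
  have hPS : P ∈ S := Finset.orderEmbOfFin_mem S hS p'
  have hQS : Q ∈ S := Finset.orderEmbOfFin_mem S hS q'
  have hPQ : P < Q := (S.orderEmbOfFin hS).strictMono hpq
  -- the two lists
  set L₁ : List (Fin n) := (((List.finRange i).filter (fun k => decide (k ≠ p' ∧ k ≠ q'))).map σ)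
      ++ (List.finRange n).filter (fun k => decide (k ∉ S)) with hL₁
  set L₂ : List (Fin n) := (List.finRange n).filter (fun k => decide (k ≠ P ∧ k ≠ Q)) with hL₂
  have hlist : (((List.finRange i).filter (fun k => decide (k ≠ p' ∧ k ≠ q'))).map (fun k => a (σ k)))
      ++ ((List.finRange n).filter (fun k => decide (k ∉ S))).map a = L₁.map a := by
    rw [hL₁, List.map_append, List.map_map]
    rfl
  have hperm : L₁.Perm L₂ := by
    have hnd₁ : L₁.Nodup := by
      apply List.Nodup.append
      · exact (((List.nodup_finRange i).filter _)).map (S.orderEmbOfFin hS).injective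
      · exact (List.nodup_finRange n).filter _
      · intro x hx hx'
        simp only [List.mem_map, List.mem_filter, List.mem_finRange, true_and,
          decide_eq_true_eq] at hx hx'
        obtain ⟨k, _, rfl⟩ := hx
        exact hx' (Finset.orderEmbOfFin_mem S hS k)
    have hnd₂ : L₂.Nodup := (List.nodup_finRange n).filter _
    refine (List.perm_ext_iff_of_nodup hnd₁ hnd₂).mpr ?_
    intro x
    simp only [hL₁, hL₂, List.mem_append, List.mem_map, List.mem_filter, List.mem_finRange,
      true_and, decide_eq_true_eq]
    constructor
    · rintro (⟨k, ⟨hk1, hk2⟩, rfl⟩ | hxS)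
      · exact ⟨fun h => hk1 ((S.orderEmbOfFin hS).injective h),
          fun h => hk2 ((S.orderEmbOfFin hS).injective h)⟩
      · exact ⟨fun h => hxS (h ▸ hPS), fun h => hxS (h ▸ hQS)⟩
    · rintro ⟨hxP, hxQ⟩
      by_cases hxS : x ∈ S
      · obtain ⟨k, rfl⟩ := (mem_iff_orderEmb S hS x).mp hxS
        exact Or.inl ⟨k, ⟨fun h => hxP (by rw [h]), fun h => hxQ (by rw [h])⟩, rfl⟩
      · exact Or.inr hxS
  have hmem : ∀ y ∈ L₁, a y ∈ 𝒜 (d y) := fun y _ => ha y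
  rw [hlist, mprod_perm 𝒜 μ hμassoc hμcomm d a hperm hmem]
  have hinv₂ : invExp d L₂ = 0 := invExp_sorted d (finRange_filter_sorted n _)
  have hsorted1 : (((List.finRange i).filter (fun k => decide (k ≠ p' ∧ k ≠ q'))).map σ).Pairwise (· < ·) :=
    List.Pairwise.map σ (fun a b h => (S.orderEmbOfFin hS).strictMono h)
      (finRange_filter_sorted i _)
  have hinv₁ : invExp d L₁
      = ((((List.finRange i).filter (fun k => decide (k ≠ p' ∧ k ≠ q'))).map σ).map
          (fun x => d x * ((((List.finRange n).filter (fun k => decide (k ∉ S))).filter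
            (fun y => decide (y < x))).map d).sum)).sum := by
    rw [hL₁, invExp_append, invExp_sorted d hsorted1,
      invExp_sorted d (finRange_filter_sorted n _)]
    ring
  -- convert the cross term to a Finset sum
  have hinner : ∀ x : Fin n, ((((List.finRange n).filter (fun k => decide (k ∉ S))).filter
        (fun y => decide (y < x))).map d).sum = ∑ y ∈ Sᶜ.filter (fun y => y < x), d y := by
    intro x
    rw [List.filter_filter, finRange_filter_map_sum]
    congr 1
    ext y
    simp only [Finset.mem_filter, Finset.mem_univ, true_and, Finset.mem_compl,
      Bool.and_eq_true, decide_eq_true_eq]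
    tauto
  have hC : invExp d L₁ = ∑ x ∈ S.filter (fun x => x ≠ P ∧ x ≠ Q),
      d x * ∑ y ∈ Sᶜ.filter (fun y => y < x), d y := by
    rw [hinv₁, List.map_map]
    have : ((List.finRange i).filter (fun k => decide (k ≠ p' ∧ k ≠ q'))).map
        ((fun x => d x * ((((List.finRange n).filter (fun k => decide (k ∉ S))).filter
          (fun y => decide (y < x))).map d).sum) ∘ σ)
        = ((List.finRange i).filter (fun k => decide (k ≠ p' ∧ k ≠ q'))).map
          (fun k => d (σ k) * ∑ y ∈ Sᶜ.filter (fun y => y < σ k), d y) := by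
      apply List.map_congr_left
      intro k _
      simp only [Function.comp_apply, hinner]
    rw [this, finRange_filter_map_sum i _ (fun k => d (σ k) * ∑ y ∈ Sᶜ.filter (fun y => y < σ k), d y)]
    have := sum_via_orderEmb S hS (fun x => d x * ∑ y ∈ Sᶜ.filter (fun y => y < x), d y)
      (fun k => (decide (k ≠ p' ∧ k ≠ q') = true)) (fun x => x ≠ P ∧ x ≠ Q) ?_
    · exact this
    · intro k
      simp only [decide_eq_true_eq]
      constructor
      · rintro ⟨h1, h2⟩
        exact ⟨fun h => h1 ((S.orderEmbOfFin hS).injective h),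
          fun h => h2 ((S.orderEmbOfFin hS).injective h)⟩
      · rintro ⟨h1, h2⟩
        exact ⟨fun h => h1 (by rw [h]), fun h => h2 (by rw [h])⟩
  have hc1 : ∑ j ∈ univ.filter (fun j => j < p'), d (σ j)
      = ∑ x ∈ S.filter (fun x => x < P), d x := by
    apply sum_via_orderEmb S hS d
    intro k
    exact (S.orderEmbOfFin hS).lt_iff_lt.symm
  have hc2 : ∑ j ∈ univ.filter (fun j => j < q' ∧ j ≠ p'), d (σ j)
      = ∑ x ∈ S.filter (fun x => x < Q ∧ x ≠ P), d x := by
    apply sum_via_orderEmb S hS d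
    intro k
    constructor
    · rintro ⟨h1, h2⟩
      exact ⟨(S.orderEmbOfFin hS).strictMono h1, fun h => h2 ((S.orderEmbOfFin hS).injective h)⟩
    · rintro ⟨h1, h2⟩
      exact ⟨(S.orderEmbOfFin hS).lt_iff_lt.mp h1, fun h => h2 (by rw [h])⟩
  -- split the universal sums
  have hsplitP : ∑ j ∈ univ.filter (fun j => j < P), d j
      = (∑ x ∈ S.filter (fun x => x < P), d x) + ∑ y ∈ Sᶜ.filter (fun y => y < P), d y := by
    rw [← Finset.sum_filter_add_sum_filter_not (univ.filter (fun j => j < P)) (· ∈ S) d]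
    congr 1
    · congr 1; ext x; simp [and_comm]
    · congr 1; ext x; simp [Finset.mem_compl, and_comm]
  have hsplitQ : ∑ j ∈ univ.filter (fun j => j < Q ∧ j ≠ P), d j
      = (∑ x ∈ S.filter (fun x => x < Q ∧ x ≠ P), d x) + ∑ y ∈ Sᶜ.filter (fun y => y < Q), d y := by
    rw [← Finset.sum_filter_add_sum_filter_not (univ.filter (fun j => j < Q ∧ j ≠ P)) (· ∈ S) d]
    congr 1
    · congr 1; ext x; simp [and_comm]
    · congr 1
      ext x
      simp only [Finset.mem_filter, Finset.mem_univ, true_and, Finset.mem_compl]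
      constructor
      · rintro ⟨⟨h1, _⟩, h3⟩; exact ⟨h3, h1⟩
      · rintro ⟨h1, h2⟩; exact ⟨⟨h2, fun h => h1 (h ▸ hPS)⟩, h1⟩
  -- split the unshuffle sign sum over S
  have hE₁ : ∑ p ∈ S, d p * ∑ q ∈ Sᶜ.filter (fun q => q < p), d q
      = d P * (∑ y ∈ Sᶜ.filter (fun y => y < P), d y)
        + d Q * (∑ y ∈ Sᶜ.filter (fun y => y < Q), d y)
        + ∑ x ∈ S.filter (fun x => x ≠ P ∧ x ≠ Q),
            d x * ∑ y ∈ Sᶜ.filter (fun y => y < x), d y := by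
    have hQP : Q ∈ S.erase P := Finset.mem_erase.mpr ⟨hPQ.ne', hQS⟩
    have hfe : S.filter (fun x => x ≠ P ∧ x ≠ Q) = (S.erase P).erase Q := by
      ext x
      simp only [Finset.mem_filter, Finset.mem_erase]
      tauto
    rw [hfe, ← Finset.sum_erase_add S _ hPS, ← Finset.sum_erase_add (S.erase P) _ hQP]
    ring
  -- put everything together
  rw [smul_smul, smul_smul]
  congr 1
  rw [unshuffleSign, hinv₂, hC, hc1, hc2, hsplitP, hsplitQ, hE₁,
    ← neg_one_zpow_add, ← neg_one_zpow_add]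
  refine neg_one_zpow_eq_of_sub_even _ _
    (∑ x ∈ S.filter (fun x => x ≠ P ∧ x ≠ Q), d x * ∑ y ∈ Sᶜ.filter (fun y => y < x), d y) ?_
  ring
end core

section perS
variable {K A : Type} [Field K] [AddCommGroup A] [Module K A]
variable (𝒜 : ℤ → Submodule K A) (μ ν : A →ₗ[K] A →ₗ[K] A)

lemma double_filter_sum {β : Type*} [AddCommMonoid β] (m : ℕ) (F : Fin m → Fin m → β) :
    ∑ p : Fin m, ∑ q ∈ univ.filter (fun q => p < q), F p q
      = ∑ z ∈ (univ ×ˢ univ : Finset (Fin m × Fin m)).filter (fun z => z.1 < z.2), F z.1 z.2 := by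
  rw [Finset.sum_filter,
    Finset.sum_product' (f := fun p q => if p < q then F p q else 0)]
  simp [Finset.sum_filter]

lemma pair_bij_sum {β : Type*} [AddCommMonoid β] {n i : ℕ} (S : Finset (Fin n)) (hS : S.card = i)
    (F : Fin n → Fin n → β) :
    ∑ z ∈ (univ ×ˢ univ : Finset (Fin i × Fin i)).filter (fun z => z.1 < z.2),
        F (S.orderEmbOfFin hS z.1) (S.orderEmbOfFin hS z.2)
      = ∑ z ∈ (univ ×ˢ univ : Finset (Fin n × Fin n)).filter
          (fun z => z.1 < z.2 ∧ z.1 ∈ S ∧ z.2 ∈ S), F z.1 z.2 := by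
  apply Finset.sum_bij (fun z _ => (S.orderEmbOfFin hS z.1, S.orderEmbOfFin hS z.2))
  · intro z hz
    simp only [Finset.mem_filter, Finset.mem_product, Finset.mem_univ, true_and] at hz ⊢
    exact ⟨(S.orderEmbOfFin hS).strictMono hz, Finset.orderEmbOfFin_mem S hS z.1,
      Finset.orderEmbOfFin_mem S hS z.2⟩
  · intro z₁ h₁ z₂ h₂ h
    have h1 := (S.orderEmbOfFin hS).injective (congrArg Prod.fst h)
    have h2 := (S.orderEmbOfFin hS).injective (congrArg Prod.snd h)
    exact Prod.ext h1 h2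
  · intro z hz
    simp only [Finset.mem_filter, Finset.mem_product, Finset.mem_univ, true_and] at hz
    obtain ⟨hlt, h1, h2⟩ := hz
    obtain ⟨k₁, hk₁⟩ := (mem_iff_orderEmb S hS z.1).mp h1
    obtain ⟨k₂, hk₂⟩ := (mem_iff_orderEmb S hS z.2).mp h2
    refine ⟨(k₁, k₂), ?_, ?_⟩
    · simp only [Finset.mem_filter, Finset.mem_product, Finset.mem_univ, true_and]
      rw [← (S.orderEmbOfFin hS).lt_iff_lt, hk₁, hk₂]; exact hlt
    · simp [hk₁, hk₂]
  · intro z hz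
    rfl

lemma pair_reindex {β : Type*} [AddCommMonoid β] {n i : ℕ} (S : Finset (Fin n)) (hS : S.card = i)
    (F : Fin n → Fin n → β) :
    ∑ p' : Fin i, ∑ q' ∈ univ.filter (fun q => p' < q),
        F (S.orderEmbOfFin hS p') (S.orderEmbOfFin hS q')
      = ∑ P : Fin n, ∑ Q ∈ univ.filter (fun Q => P < Q),
          (if P ∈ S ∧ Q ∈ S then F P Q else 0) := by
  rw [double_filter_sum i (F := fun p q => F (S.orderEmbOfFin hS p) (S.orderEmbOfFin hS q)),
    pair_bij_sum S hS F]
  have hff : (univ ×ˢ univ : Finset (Fin n × Fin n)).filter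
      (fun z => z.1 < z.2 ∧ z.1 ∈ S ∧ z.2 ∈ S)
      = ((univ ×ˢ univ : Finset (Fin n × Fin n)).filter (fun z => z.1 < z.2)).filter
        (fun z => z.1 ∈ S ∧ z.2 ∈ S) := by
    rw [Finset.filter_filter]
  rw [hff, Finset.sum_filter,
    ← double_filter_sum n (F := fun P Q => if P ∈ S ∧ Q ∈ S then F P Q else 0)]

lemma perS
    (hμassoc : ∀ a b c : A, μ (μ a b) c = μ a (μ b c))
    (hμcomm : ∀ (i j : ℤ) (a b : A), a ∈ 𝒜 i → b ∈ 𝒜 j →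
      μ a b = ((-1 : K) ^ (i * j)) • μ b a)
    {n : ℕ} (d : Fin n → ℤ) (a : Fin n → A) (ha : ∀ i, a i ∈ 𝒜 (d i))
    {i : ℕ} (S : Finset (Fin n)) (hS : S.card = i) :
    unshuffleSign K S d •
      mprod μ (nuFam ν μ i (fun k => d (S.orderEmbOfFin hS k)) (fun k => a (S.orderEmbOfFin hS k)))
        (((List.finRange n).filter (fun k => decide (k ∉ S))).map a)
    = ∑ P : Fin n, ∑ Q ∈ univ.filter (fun Q => P < Q),
        (if P ∈ S ∧ Q ∈ S then
          ((-1 : K) ^ (d P * (∑ j ∈ univ.filter (fun j => j < P), d j)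
            + d Q * (∑ j ∈ univ.filter (fun j => j < Q ∧ j ≠ P), d j))) •
          mprod μ (ν (a P) (a Q))
            (((List.finRange n).filter (fun k => decide (k ≠ P ∧ k ≠ Q))).map a)
        else 0) := by
  rw [nuFam]
  rw [mprod_sum]
  rw [Finset.smul_sum]
  have step : ∀ p' : Fin i,
      unshuffleSign K S d • mprod μ
        (∑ q' ∈ univ.filter (fun q => p' < q),
          ((-1 : K) ^ ((fun k => d (S.orderEmbOfFin hS k)) p' * (∑ j ∈ univ.filter (fun j => j < p'), d (S.orderEmbOfFin hS j))
            + d (S.orderEmbOfFin hS q') * (∑ j ∈ univ.filter (fun j => j < q' ∧ j ≠ p'), d (S.orderEmbOfFin hS j)))) •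
            mprod μ (ν (a (S.orderEmbOfFin hS p')) (a (S.orderEmbOfFin hS q')))
              (((List.finRange i).filter (fun k => decide (k ≠ p' ∧ k ≠ q'))).map (fun k => a (S.orderEmbOfFin hS k))))
        (((List.finRange n).filter (fun k => decide (k ∉ S))).map a)
      = ∑ q' ∈ univ.filter (fun q => p' < q),
          ((-1 : K) ^ (d (S.orderEmbOfFin hS p') * (∑ j ∈ univ.filter (fun j => j < S.orderEmbOfFin hS p'), d j)
            + d (S.orderEmbOfFin hS q') * (∑ j ∈ univ.filter (fun j => j < S.orderEmbOfFin hS q' ∧ j ≠ S.orderEmbOfFin hS p'), d j))) •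
          mprod μ (ν (a (S.orderEmbOfFin hS p')) (a (S.orderEmbOfFin hS q')))
            (((List.finRange n).filter (fun k => decide (k ≠ S.orderEmbOfFin hS p' ∧ k ≠ S.orderEmbOfFin hS q'))).map a) := by
    intro p'
    rw [mprod_sum, Finset.smul_sum]
    apply Finset.sum_congr rfl
    intro q' hq'
    have hpq : p' < q' := by simpa using hq'
    rw [mprod_smul, ← mprod_append]
    exact core_term 𝒜 μ ν hμassoc hμcomm d a ha S hS p' q' hpq
  refine Eq.trans (Finset.sum_congr rfl (fun p' _ => step p')) ?_
  exact pair_reindex S hS (fun P Q =>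
    ((-1 : K) ^ (d P * (∑ j ∈ univ.filter (fun j => j < P), d j)
      + d Q * (∑ j ∈ univ.filter (fun j => j < Q ∧ j ≠ P), d j))) •
    mprod μ (ν (a P) (a Q))
      (((List.finRange n).filter (fun k => decide (k ≠ P ∧ k ≠ Q))).map a))
end perS

section counting
variable {n : ℕ}

lemma card_contain_pair (P Q : Fin n) (hPQ : P < Q) :
    (univ.filter (fun S : Finset (Fin n) => P ∈ S ∧ Q ∈ S)).card = 2 ^ (n - 2) := by
  classical
  have hne : P ≠ Q := hPQ.ne
  have hcard : (({P, Q} : Finset (Fin n))ᶜ).card = n - 2 := by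
    rw [Finset.card_compl, Finset.card_insert_of_notMem (by simpa using hne),
      Finset.card_singleton, Fintype.card_fin]
  rw [← hcard, ← Finset.card_powerset]
  apply Finset.card_nbij' (fun S => S \ {P, Q}) (fun T => T ∪ {P, Q})
  · intro S hS
    simp only [Finset.mem_coe, Finset.mem_filter, Finset.mem_univ, true_and] at hS
    rw [Finset.mem_coe, Finset.mem_powerset]
    intro x hx
    rw [Finset.mem_compl]
    exact (Finset.mem_sdiff.mp hx).2
  · intro T hT
    simp only [Finset.mem_coe, Finset.mem_powerset] at hT
    simp only [Finset.mem_coe, Finset.mem_filter, Finset.mem_univ, true_and]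
    exact ⟨Finset.mem_union_right _ (by simp), Finset.mem_union_right _ (by simp)⟩
  · intro S hS
    simp only [Finset.mem_coe, Finset.mem_filter, Finset.mem_univ, true_and] at hS
    apply Finset.sdiff_union_of_subset
    intro x hx
    simp only [Finset.mem_insert, Finset.mem_singleton] at hx
    rcases hx with rfl | rfl
    · exact hS.1
    · exact hS.2
  · intro T hT
    simp only [Finset.mem_coe, Finset.mem_powerset] at hT
    dsimp only
    rw [Finset.union_sdiff_cancel_right]
    refine Finset.disjoint_left.mpr ?_
    intro x hx hx'
    have := hT hx
    rw [Finset.mem_compl] at this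
    exact this hx'

lemma sum_card_contain_pair (hn : 2 ≤ n) (P Q : Fin n) (hPQ : P < Q) :
    ∑ i ∈ Finset.Icc 1 n, (univ.filter
        (fun S : Finset (Fin n) => S.card = i ∧ P ∈ S ∧ Q ∈ S)).card = 2 ^ (n - 2) := by
  classical
  rw [← card_contain_pair P Q hPQ]
  rw [Finset.card_eq_sum_card_fiberwise
    (f := fun S : Finset (Fin n) => S.card) (t := Finset.Icc 1 n) ?_]
  · apply Finset.sum_congr rfl
    intro i _
    congr 1
    rw [Finset.filter_filter]
    apply Finset.filter_congr
    intro S _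
    tauto
  · intro S hS
    simp only [Finset.mem_coe, Finset.mem_filter, Finset.mem_univ, true_and] at hS
    rw [Finset.mem_coe, Finset.mem_Icc]
    constructor
    · exact Finset.card_pos.mpr ⟨P, hS.1⟩
    · simpa using Finset.card_le_univ S

lemma card_contain_pair_two (P Q : Fin n) (hPQ : P < Q) :
    (univ.filter (fun S : Finset (Fin n) => S.card = 2 ∧ P ∈ S ∧ Q ∈ S)).card = 1 := by
  classical
  have : univ.filter (fun S : Finset (Fin n) => S.card = 2 ∧ P ∈ S ∧ Q ∈ S)
      = {({P, Q} : Finset (Fin n))} := by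
    ext S
    simp only [Finset.mem_filter, Finset.mem_univ, true_and, Finset.mem_singleton]
    constructor
    · rintro ⟨hc, hP, hQ⟩
      have hsub : ({P, Q} : Finset (Fin n)) ⊆ S := by
        intro x hx
        simp only [Finset.mem_insert, Finset.mem_singleton] at hx
        rcases hx with rfl | rfl
        · exact hP
        · exact hQ
      have hc2 : ({P, Q} : Finset (Fin n)).card = 2 := by
        rw [Finset.card_insert_of_notMem (by simpa using hPQ.ne), Finset.card_singleton]
      exact (Finset.eq_of_subset_of_card_le hsub (by rw [hc, hc2])).symm
    · rintro rfl
      refine ⟨?_, by simp, by simp⟩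
      rw [Finset.card_insert_of_notMem (by simpa using hPQ.ne), Finset.card_singleton]
  rw [this, Finset.card_singleton]
end counting

section final
variable {K A : Type} [Field K] [AddCommGroup A] [Module K A]
variable (𝒜 : ℤ → Submodule K A) (μ ν : A →ₗ[K] A →ₗ[K] A)

lemma hatExpand
    (hμassoc : ∀ a b c : A, μ (μ a b) c = μ a (μ b c))
    (hμcomm : ∀ (i j : ℤ) (a b : A), a ∈ 𝒜 i → b ∈ 𝒜 j →
      μ a b = ((-1 : K) ^ (i * j)) • μ b a)
    {n : ℕ} (d : Fin n → ℤ) (a : Fin n → A) (ha : ∀ i, a i ∈ 𝒜 (d i)) (i : ℕ) :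
    hatNuMul ν μ n i d a = ∑ P : Fin n, ∑ Q ∈ univ.filter (fun Q => P < Q),
      (univ.filter (fun S : Finset (Fin n) => S.card = i ∧ P ∈ S ∧ Q ∈ S)).card •
        (((-1 : K) ^ (d P * (∑ j ∈ univ.filter (fun j => j < P), d j)
            + d Q * (∑ j ∈ univ.filter (fun j => j < Q ∧ j ≠ P), d j))) •
          mprod μ (ν (a P) (a Q))
            (((List.finRange n).filter (fun k => decide (k ≠ P ∧ k ≠ Q))).map a)) := by
  classical
  calc hatNuMul ν μ n i d a
      = ∑ S : {S : Finset (Fin n) // S.card = i},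
          ∑ P : Fin n, ∑ Q ∈ univ.filter (fun Q => P < Q),
            (if P ∈ S.1 ∧ Q ∈ S.1 then
              ((-1 : K) ^ (d P * (∑ j ∈ univ.filter (fun j => j < P), d j)
                + d Q * (∑ j ∈ univ.filter (fun j => j < Q ∧ j ≠ P), d j))) •
              mprod μ (ν (a P) (a Q))
                (((List.finRange n).filter (fun k => decide (k ≠ P ∧ k ≠ Q))).map a)
            else 0) :=
        Finset.sum_congr rfl (fun S _ => perS 𝒜 μ ν hμassoc hμcomm d a ha S.1 S.2)
    _ = ∑ S ∈ univ.filter (fun S : Finset (Fin n) => S.card = i),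
          ∑ P : Fin n, ∑ Q ∈ univ.filter (fun Q => P < Q),
            (if P ∈ S ∧ Q ∈ S then
              ((-1 : K) ^ (d P * (∑ j ∈ univ.filter (fun j => j < P), d j)
                + d Q * (∑ j ∈ univ.filter (fun j => j < Q ∧ j ≠ P), d j))) •
              mprod μ (ν (a P) (a Q))
                (((List.finRange n).filter (fun k => decide (k ≠ P ∧ k ≠ Q))).map a)
            else 0) :=
        (Finset.sum_subtype (p := fun S : Finset (Fin n) => S.card = i)
          (univ.filter (fun S : Finset (Fin n) => S.card = i)) (by simp)
          (fun S => ∑ P : Fin n, ∑ Q ∈ univ.filter (fun Q => P < Q),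
            (if P ∈ S ∧ Q ∈ S then
              ((-1 : K) ^ (d P * (∑ j ∈ univ.filter (fun j => j < P), d j)
                + d Q * (∑ j ∈ univ.filter (fun j => j < Q ∧ j ≠ P), d j))) •
              mprod μ (ν (a P) (a Q))
                (((List.finRange n).filter (fun k => decide (k ≠ P ∧ k ≠ Q))).map a)
            else 0))).symm
    _ = ∑ P : Fin n, ∑ S ∈ univ.filter (fun S : Finset (Fin n) => S.card = i),
          ∑ Q ∈ univ.filter (fun Q => P < Q), _ := Finset.sum_comm
    _ = ∑ P : Fin n, ∑ Q ∈ univ.filter (fun Q => P < Q),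
          ∑ S ∈ univ.filter (fun S : Finset (Fin n) => S.card = i),
            (if P ∈ S ∧ Q ∈ S then
              ((-1 : K) ^ (d P * (∑ j ∈ univ.filter (fun j => j < P), d j)
                + d Q * (∑ j ∈ univ.filter (fun j => j < Q ∧ j ≠ P), d j))) •
              mprod μ (ν (a P) (a Q))
                (((List.finRange n).filter (fun k => decide (k ≠ P ∧ k ≠ Q))).map a)
            else 0) :=
        Finset.sum_congr rfl (fun P _ => Finset.sum_comm)
    _ = _ := by
        refine Finset.sum_congr rfl (fun P _ => Finset.sum_congr rfl (fun Q _ => ?_))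
        rw [← Finset.sum_filter, Finset.filter_filter, Finset.sum_const]

theorem main'
    (hμassoc : ∀ a b c : A, μ (μ a b) c = μ a (μ b c))
    (hμcomm : ∀ (i j : ℤ) (a b : A), a ∈ 𝒜 i → b ∈ 𝒜 j →
      μ a b = ((-1 : K) ^ (i * j)) • μ b a) :
    ∀ (n : ℕ), 2 ≤ n → ∀ (d : Fin n → ℤ) (a : Fin n → A), (∀ i, a i ∈ 𝒜 (d i)) →
      ∑ i ∈ Finset.Icc 1 n, hatNuMul ν μ n i d a
        = ((2 : K) ^ (n - 2)) • hatNuMul ν μ n 2 d a := by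
  intro n hn d a ha
  rw [hatExpand 𝒜 μ ν hμassoc hμcomm d a ha 2]
  calc ∑ i ∈ Finset.Icc 1 n, hatNuMul ν μ n i d a
      = ∑ i ∈ Finset.Icc 1 n, ∑ P : Fin n, ∑ Q ∈ univ.filter (fun Q => P < Q),
          (univ.filter (fun S : Finset (Fin n) => S.card = i ∧ P ∈ S ∧ Q ∈ S)).card •
            (((-1 : K) ^ (d P * (∑ j ∈ univ.filter (fun j => j < P), d j)
                + d Q * (∑ j ∈ univ.filter (fun j => j < Q ∧ j ≠ P), d j))) •
              mprod μ (ν (a P) (a Q))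
                (((List.finRange n).filter (fun k => decide (k ≠ P ∧ k ≠ Q))).map a)) :=
        Finset.sum_congr rfl (fun i _ => hatExpand 𝒜 μ ν hμassoc hμcomm d a ha i)
    _ = ∑ P : Fin n, ∑ i ∈ Finset.Icc 1 n, ∑ Q ∈ univ.filter (fun Q => P < Q), _ :=
        Finset.sum_comm
    _ = ∑ P : Fin n, ∑ Q ∈ univ.filter (fun Q => P < Q), ∑ i ∈ Finset.Icc 1 n,
          (univ.filter (fun S : Finset (Fin n) => S.card = i ∧ P ∈ S ∧ Q ∈ S)).card •
            (((-1 : K) ^ (d P * (∑ j ∈ univ.filter (fun j => j < P), d j)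
                + d Q * (∑ j ∈ univ.filter (fun j => j < Q ∧ j ≠ P), d j))) •
              mprod μ (ν (a P) (a Q))
                (((List.finRange n).filter (fun k => decide (k ≠ P ∧ k ≠ Q))).map a)) :=
        Finset.sum_congr rfl (fun P _ => Finset.sum_comm)
    _ = _ := ?_
  rw [Finset.smul_sum]
  refine Finset.sum_congr rfl (fun P _ => ?_)
  rw [Finset.smul_sum]
  refine Finset.sum_congr rfl (fun Q hQ => ?_)
  have hPQ : P < Q := by simpa using hQ
  rw [card_contain_pair_two P Q hPQ, one_nsmul, ← Finset.sum_smul,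
    sum_card_contain_pair hn P Q hPQ, ← Nat.cast_smul_eq_nsmul K]
  norm_num
end final

/-- **Comparison of the two coderivations** associated to a Gerstenhaber algebra
(`Up to the coalgebra level`): on `SⁿA` (n ≥ 2),
`Σ_{i=1}^{n} μ^{n-i+1} ∘ (⊗^{n-i+1} ⊐ νᵢ) = 2^{n-2} · μ^{n-2} ∘ (⊗^{n-1} ⊐ ν)`,
i.e. the multiplication composed with the coderivation extending all higher brackets `νᵢ`
equals `2^{n-2}` times the multiplication composed with the coderivation extending `ν` alone. -/
theorem gerstenhaber_coderivation_comparison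
    (K : Type) [Field K] [CharZero K]
    (A : Type) [AddCommGroup A] [Module K A]
    (𝒜 : ℤ → Submodule K A)
    (μ ν : A →ₗ[K] A →ₗ[K] A)
    (hμdeg : ∀ (i j : ℤ) (a b : A), a ∈ 𝒜 i → b ∈ 𝒜 j → μ a b ∈ 𝒜 (i + j))
    (hμassoc : ∀ a b c : A, μ (μ a b) c = μ a (μ b c))
    (hμcomm : ∀ (i j : ℤ) (a b : A), a ∈ 𝒜 i → b ∈ 𝒜 j →
      μ a b = ((-1 : K) ^ (i * j)) • μ b a)
    (hνdeg : ∀ (i j : ℤ) (a b : A), a ∈ 𝒜 i → b ∈ 𝒜 j → ν a b ∈ 𝒜 (i + j - 1))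
    (hνsymm : ∀ (i j : ℤ) (a b : A), a ∈ 𝒜 i → b ∈ 𝒜 j →
      ν a b = ((-1 : K) ^ (i * j)) • ν b a)
    (hνjac : ∀ (i j k : ℤ) (a b c : A), a ∈ 𝒜 i → b ∈ 𝒜 j → c ∈ 𝒜 k →
      ν (ν a b) c + ((-1 : K) ^ (j * k)) • ν (ν a c) b
        + ((-1 : K) ^ (i * (j + k))) • ν (ν b c) a = 0)
    (hLeib : ∀ (i j : ℤ) (a b c : A), a ∈ 𝒜 i → b ∈ 𝒜 j →
      ν a (μ b c) = μ (ν a b) c + ((-1 : K) ^ ((i - 1) * j)) • μ b (ν a c)) :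
    ∀ (n : ℕ), 2 ≤ n → ∀ (d : Fin n → ℤ) (a : Fin n → A), (∀ i, a i ∈ 𝒜 (d i)) →
      ∑ i ∈ Finset.Icc 1 n, hatNuMul ν μ n i d a
        = ((2 : K) ^ (n - 2)) • hatNuMul ν μ n 2 d a :=
  main' 𝒜 μ ν hμassoc hμcomm
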